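/- If R is nontrivial, the augmentation ideal I = ker ε of the group algebra AddMonoidAlgebra R G satisfies I^k ≠ 0; hence the nilpotency degree of I is exactly k + 1. -/

import Mathlib

open Finset

/-- Sharp binomial bound for ideal powers. -/
lemma aux_sup_pow {A : Type*} [CommRing A] (I J : Ideal A) (n m : ℕ) :
    (I ⊔ J) ^ (n + m + 1) ≤ I ^ (n + 1) ⊔ J ^ (m + 1) := by
  rw [← Ideal.add_eq_sup, ← Ideal.add_eq_sup, add_pow, Ideal.sum_eq_sup]
  apply Finset.sup_le
  intro i hi
  simp only [Finset.mem_range] at hi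
  by_cases hn : n + 1 ≤ i
  · exact Ideal.mul_le_left.trans (Ideal.mul_le_left.trans
      ((Ideal.pow_le_pow_right hn).trans le_sup_left))
  · refine Ideal.mul_le_left.trans (Ideal.mul_le_right.trans
      ((Ideal.pow_le_pow_right ?_).trans le_sup_right))
    omega

lemma aux_nilpotent_span {A : Type*} [CommRing A] (s : Finset A)
    (h : ∀ a ∈ s, a * a = 0) : (Ideal.span (s : Set A)) ^ (s.card + 1) = ⊥ := by
  classical
  induction s using Finset.induction_on with
  | empty => simp
  | @insert a s ha ih =>
    rw [Finset.card_insert_of_notMem ha, Finset.coe_insert, Ideal.span_insert]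
    apply le_bot_iff.mp
    have h1 : (Ideal.span {a} ⊔ Ideal.span (s : Set A)) ^ (1 + s.card + 1) ≤
        Ideal.span {a} ^ (1 + 1) ⊔ Ideal.span (s : Set A) ^ (s.card + 1) :=
      aux_sup_pow _ _ 1 s.card
    have h2 : Ideal.span {a} ^ (1 + 1) = ⊥ := by
      rw [Ideal.span_singleton_pow, pow_two, h a (Finset.mem_insert_self a s),
        Ideal.span_singleton_eq_bot]
    have h3 : Ideal.span (s : Set A) ^ (s.card + 1) = ⊥ :=
      ih fun b hb => h b (Finset.mem_insert_of_mem hb)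
    rw [h2, h3, sup_idem] at h1
    have : s.card + 1 + 1 = 1 + s.card + 1 := by omega
    rw [this]
    exact h1

lemma aux_prod_mem_pow {A : Type*} [CommRing A] (I : Ideal A) {ι : Type*}
    (s : Finset ι) (f : ι → A) (h : ∀ i ∈ s, f i ∈ I) :
    ∏ i ∈ s, f i ∈ I ^ s.card := by
  classical
  induction s using Finset.induction_on with
  | empty => simp [Ideal.one_eq_top]
  | @insert a s ha ih =>
    rw [Finset.prod_insert ha, Finset.card_insert_of_notMem ha, pow_succ']
    exact Ideal.mul_mem_mul (h a (Finset.mem_insert_self a s))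
      (ih fun i hi => h i (Finset.mem_insert_of_mem hi))

/-- Over a nontrivial commutative ring of characteristic 2, the augmentation ideal `I = ker ε`
of the group algebra of `G = Fin k → ZMod 2` satisfies `I ^ k ≠ 0`; together with
`I ^ (k + 1) = 0`, the nilpotency degree of `I` is exactly `k + 1`. -/
theorem augmentationIdeal_pow_ne_bot (k : ℕ) (R : Type*) [CommRing R] [Nontrivial R]
    [CharP R 2]
    (ε : AddMonoidAlgebra R (Fin k → ZMod 2) →ₐ[R] R)
    (hε : ∀ (g : Fin k → ZMod 2) (r : R), ε (AddMonoidAlgebra.single g r) = r) :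
    (RingHom.ker ε) ^ k ≠ ⊥ ∧ (RingHom.ker ε) ^ (k + 1) = ⊥ := by
  classical
  set G := (Fin k → ZMod 2) with hG
  set A := AddMonoidAlgebra R G with hA
  set e : Fin k → G := fun i => Pi.single i 1 with he
  set y : G → A := fun g => AddMonoidAlgebra.single g 1 + 1 with hy
  -- characteristic 2 facts
  have h2 : (1 : A) + 1 = 0 := by
    have hr : (1 : R) + 1 = 0 := CharTwo.add_self_eq_zero 1
    calc (1 : A) + 1 = algebraMap R A ((1 : R) + 1) := by simp
    _ = 0 := by rw [hr, map_zero]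
  have hxx : ∀ a : A, a + a = 0 := fun a => by
    calc a + a = (1 + 1) * a := by ring
    _ = 0 := by rw [h2, zero_mul]
  have hy0 : y 0 = 0 := by
    simp only [hy]
    rw [← AddMonoidAlgebra.one_def]
    exact h2
  have hsingle_mul : ∀ g h : G, (AddMonoidAlgebra.single g (1:R)) *
      AddMonoidAlgebra.single h 1 = AddMonoidAlgebra.single (g + h) 1 := by
    intro g h
    rw [AddMonoidAlgebra.single_mul_single, mul_one]
  have hadd : ∀ g h : G, y (g + h) = y g * y h + y g + y h := by
    intro g h
    simp only [hy]
    have hm := hsingle_mul g h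
    linear_combination (-hm) - (AddMonoidAlgebra.single g (1:R) +
      AddMonoidAlgebra.single h 1 + 1) * h2
  have hgg : ∀ g : G, g + g = 0 := fun g => by
    funext i
    exact CharTwo.add_self_eq_zero (g i)
  have hsq : ∀ g : G, y g * y g = 0 := by
    intro g
    simp only [hy]
    have hm := hsingle_mul g g
    rw [hgg g, ← AddMonoidAlgebra.one_def] at hm
    linear_combination hm + (AddMonoidAlgebra.single g (1:R) + 1) * h2
  have hyker : ∀ g : G, y g ∈ RingHom.ker ε := by
    intro g
    rw [RingHom.mem_ker]
    simp only [hy]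
    rw [map_add, hε, map_one]
    exact CharTwo.add_self_eq_zero 1
  -- the finite generating set
  set s : Finset A := Finset.image (fun i => y (e i)) Finset.univ with hs
  set J : Ideal A := Ideal.span (s : Set A) with hJ
  have hJpow : J ^ (s.card + 1) = ⊥ := by
    apply aux_nilpotent_span
    intro a ha
    rw [hs, Finset.mem_image] at ha
    obtain ⟨i, -, rfl⟩ := ha
    exact hsq _
  have hyJ : ∀ g : G, y g ∈ J := by
    intro g
    rw [← Finset.univ_sum_single g]
    refine Finset.sum_induction (fun i => Pi.single i (g i)) (fun v => y v ∈ J)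
      ?_ ?_ ?_
    · intro a b pa pb
      rw [hadd]
      exact J.add_mem (J.add_mem (Ideal.mul_mem_right _ _ pa) pa) pb
    · show y 0 ∈ J
      rw [hy0]; exact J.zero_mem
    · intro i _
      show y (Pi.single i (g i)) ∈ J
      have hc : ∀ c : ZMod 2, c = 0 ∨ c = 1 := by decide
      rcases hc (g i) with hc0 | hc1
      · rw [hc0, Pi.single_zero, hy0]; exact J.zero_mem
      · rw [hc1]
        apply Ideal.subset_span
        rw [hs]
        exact Finset.mem_coe.mpr (Finset.mem_image.mpr ⟨i, Finset.mem_univ i, rfl⟩)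
  have hIJ : RingHom.ker ε ≤ J := by
    intro f hf
    rw [RingHom.mem_ker] at hf
    have hfsum : f = ∑ g ∈ f.coeff.support, AddMonoidAlgebra.single g (f.coeff g) := by
      conv_lhs => rw [← AddMonoidAlgebra.ofCoeff_coeff f, ← Finsupp.sum_single f.coeff]
      rw [AddMonoidAlgebra.ofCoeff_finsuppSum]
      rfl
    have hεf : ∑ g ∈ f.coeff.support, f.coeff g = 0 := by
      have : ε f = ∑ g ∈ f.coeff.support, f.coeff g := by
        conv_lhs => rw [hfsum]
        rw [map_sum]
        exact Finset.sum_congr rfl fun g _ => hε g (f.coeff g)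
      rw [← this, hf]
    have hkey : f = ∑ g ∈ f.coeff.support, f.coeff g • y g := by
      have : ∑ g ∈ f.coeff.support, f.coeff g • y g
          = ∑ g ∈ f.coeff.support, (AddMonoidAlgebra.single g (f.coeff g) + f.coeff g • 1) := by
        refine Finset.sum_congr rfl fun g _ => ?_
        simp only [hy]
        rw [smul_add, AddMonoidAlgebra.smul_single, smul_eq_mul, mul_one]
      rw [this, Finset.sum_add_distrib, ← Finset.sum_smul, hεf, zero_smul,
        add_zero, ← hfsum]
    rw [hkey]
    refine Ideal.sum_mem J fun g _ => ?_
    rw [Algebra.smul_def]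
    exact Ideal.mul_mem_left _ _ (hyJ g)
  have hcard : s.card ≤ k := by
    calc s.card ≤ Finset.univ.card := Finset.card_image_le
    _ = k := by simp
  constructor
  · -- I ^ k ≠ ⊥
    intro hbot
    set x : A := ∏ i : Fin k, y (e i) with hx
    have hxmem : x ∈ (RingHom.ker ε) ^ k := by
      have := aux_prod_mem_pow (RingHom.ker ε) Finset.univ (fun i => y (e i))
        (fun i _ => hyker (e i))
      simpa using this
    rw [hbot, Ideal.mem_bot] at hxmem
    -- compute x explicitly
    have hxeq : x = ∑ t ∈ (Finset.univ : Finset (Fin k)).powerset,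
        AddMonoidAlgebra.single (∑ i ∈ t, e i) (1 : R) := by
      rw [hx]
      simp only [hy]
      rw [Finset.prod_add]
      refine Finset.sum_congr rfl fun t _ => ?_
      rw [Finset.prod_const_one, mul_one, AddMonoidAlgebra.prod_single,
        Finset.prod_const_one]
    have hcoeff : x.coeff 0 = 1 := by
      rw [hxeq]
      rw [AddMonoidAlgebra.coeff_sum, Finsupp.finset_sum_apply]
      rw [Finset.sum_eq_single_of_mem (∅ : Finset (Fin k)) (by simp)]
      · simp [AddMonoidAlgebra.coeff_single]
      · intro t _ ht
        have htne : t.Nonempty := Finset.nonempty_iff_ne_empty.mpr ht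
        obtain ⟨j, hj⟩ := htne
        have hne : (∑ i ∈ t, e i) ≠ 0 := by
          intro h0
          have h0' : (∑ i ∈ t, Pi.single i 1 : Fin k → ZMod 2) = 0 := h0
          have hj0 := congrFun h0' j
          simp only [Finset.sum_apply, Pi.zero_apply] at hj0
          rw [Finset.sum_pi_single, if_pos hj] at hj0
          exact one_ne_zero hj0
        rw [AddMonoidAlgebra.coeff_single, Finsupp.single_apply, if_neg hne]
    rw [hxmem] at hcoeff
    simp only [AddMonoidAlgebra.coeff_zero, Finsupp.coe_zero, Pi.zero_apply] at hcoeff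
    exact zero_ne_one hcoeff
  · -- I ^ (k+1) = ⊥
    apply le_bot_iff.mp
    calc (RingHom.ker ε) ^ (k + 1) ≤ J ^ (k + 1) := Ideal.pow_right_mono hIJ _
    _ ≤ J ^ (s.card + 1) := Ideal.pow_le_pow_right (by omega)
    _ = ⊥ := hJpow
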